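/- Let H be an n×n Hermitian complex matrix, let T > 0, and let Ω be a nonempty open subset of the space of n×n complex matrices. Then there exist a point x ∈ Ω and a positive integer k such that exp(-i·k·T·H)·x ∈ Ω. (Poincaré-type recurrence for the Hamiltonian flow φ_t(W) = exp(-itH)·W.) -/

import Mathlib

open Matrix

open NormedSpace Filter in
private theorem aux_conjTranspose_pow_mul_pow {n : ℕ} (U : Matrix (Fin n) (Fin n) ℂ)
    (hsU : Uᴴ * U = 1) : ∀ k l : ℕ, k ≤ l → (U ^ k)ᴴ * U ^ l = U ^ (l - k) := by
  intro k
  induction k with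
  | zero => intro l _; simp
  | succ k ih =>
    intro l hl
    obtain ⟨m, rfl⟩ : ∃ m, l = m + 1 :=
      ⟨l - 1, (Nat.succ_pred_eq_of_pos (by omega)).symm⟩
    have hkm : k ≤ m := by omega
    have h1 : U ^ (k + 1) = U * U ^ k := (pow_succ' U k)
    have h2 : U ^ (m + 1) = U * U ^ m := (pow_succ' U m)
    calc (U ^ (k + 1))ᴴ * U ^ (m + 1)
        = ((U ^ k)ᴴ * (Uᴴ * U)) * U ^ m := by
          rw [h1, h2, conjTranspose_mul]
          noncomm_ring
      _ = (U ^ k)ᴴ * U ^ m := by rw [hsU, mul_one]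
      _ = U ^ (m - k) := ih m hkm
      _ = U ^ (m + 1 - (k + 1)) := by congr 1; omega

/-- Poincaré-type recurrence for the Hamiltonian flow `φ_t(W) = exp(-itH)·W`: any
nonempty open set `Ω` of matrices contains a point returning to `Ω` at some time `kT`. -/
theorem poincare_type_recurrence {n : ℕ} (H : Matrix (Fin n) (Fin n) ℂ)
    (hH : H.IsHermitian) (T : ℝ) (hT : 0 < T)
    (Ω : Set (Matrix (Fin n) (Fin n) ℂ)) (hΩopen : IsOpen Ω) (hΩne : Ω.Nonempty) :
    ∃ x ∈ Ω, ∃ k : ℕ, 0 < k ∧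
      NormedSpace.exp ((-((k : ℂ) * (T : ℂ)) * Complex.I) • H) * x ∈ Ω := by
  classical
  open NormedSpace Filter in
  obtain ⟨x, hx⟩ := hΩne
  set A : Matrix (Fin n) (Fin n) ℂ := ((-(T:ℂ)) * Complex.I) • H with hAdef
  have hstar : star ((-(T:ℂ)) * Complex.I) = -((-(T:ℂ)) * Complex.I) := by
    simp only [star_mul', Complex.star_def, Complex.conj_I, Complex.conj_ofReal, map_neg]
    ring
  have hAH : Aᴴ = -A := by
    rw [hAdef, conjTranspose_smul, hH.eq, hstar, neg_smul]
  set U : Matrix (Fin n) (Fin n) ℂ := NormedSpace.exp A with hUdef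
  have hUmem : U ∈ Matrix.unitaryGroup (Fin n) ℂ := by
    rw [hUdef, Matrix.mem_unitaryGroup_iff', Matrix.star_eq_conjTranspose,
      ← Matrix.exp_conjTranspose, hAH,
      ← Matrix.exp_add_of_commute (-A) A ((Commute.refl A).neg_left),
      neg_add_cancel, NormedSpace.exp_zero]
  have hpow : ∀ k : ℕ, NormedSpace.exp ((-((k : ℂ) * (T : ℂ)) * Complex.I) • H) = U ^ k := by
    intro k
    rw [hUdef, ← Matrix.exp_nsmul]
    congr 1
    rw [hAdef, ← Nat.cast_smul_eq_nsmul ℂ, smul_smul]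
    congr 1
    ring
  -- each power is unitary
  have hpowmem : ∀ k : ℕ, U ^ k ∈ Matrix.unitaryGroup (Fin n) ℂ := fun k => pow_mem hUmem k
  -- the compact set
  set S : Set (Matrix (Fin n) (Fin n) ℂ) :=
    {W | (∀ i j, ‖W i j‖ ≤ 1) ∧ star W * W = 1} with hSdef
  have hSclosed : IsClosed {W : Matrix (Fin n) (Fin n) ℂ | star W * W = 1} :=
    isClosed_eq (continuous_star.matrix_mul continuous_id) continuous_const
  have h0 : IsCompact (Set.pi Set.univ (fun _ : Fin n => Set.pi Set.univ
      fun _ : Fin n => Metric.closedBall (0:ℂ) 1)) :=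
    isCompact_univ_pi fun _ => isCompact_univ_pi fun _ => isCompact_closedBall _ _
  have hof : Continuous (Matrix.of : (Fin n → Fin n → ℂ) → Matrix (Fin n) (Fin n) ℂ) :=
    continuous_matrix fun i j => (continuous_apply j).comp (continuous_apply i)
  have himg : {W : Matrix (Fin n) (Fin n) ℂ | ∀ i j, ‖W i j‖ ≤ 1} =
      Matrix.of '' (Set.pi Set.univ (fun _ : Fin n => Set.pi Set.univ
        fun _ : Fin n => Metric.closedBall (0:ℂ) 1)) := by
    ext W
    constructor
    · intro h
      refine ⟨Matrix.of.symm W, ?_, rfl⟩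
      rw [Set.mem_univ_pi]
      intro i
      rw [Set.mem_univ_pi]
      intro j
      simpa [dist_zero_right] using h i j
    · rintro ⟨f, hf, rfl⟩ i j
      have h1 := Set.mem_univ_pi.mp (Set.mem_univ_pi.mp hf i) j
      simpa [dist_zero_right] using h1
  have hSball : IsCompact {W : Matrix (Fin n) (Fin n) ℂ | ∀ i j, ‖W i j‖ ≤ 1} := by
    rw [himg]; exact h0.image hof
  have hS : IsCompact S := hSball.inter_right hSclosed
  have hle : Filter.map (fun k : ℕ => U ^ k) Filter.atTop ≤ Filter.principal S := by
    rw [Filter.le_principal_iff, Filter.mem_map]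
    refine Filter.Eventually.of_forall fun k => ?_
    exact ⟨fun i j => entry_norm_bound_of_unitary (hpowmem k) i j,
      (Matrix.mem_unitaryGroup_iff'.mp (hpowmem k))⟩
  obtain ⟨V, hVS, hV⟩ := hS.exists_clusterPt hle
  -- continuity of (A, B) ↦ Aᴴ * B * x
  have hG : Continuous fun p : Matrix (Fin n) (Fin n) ℂ × Matrix (Fin n) (Fin n) ℂ =>
      p.1ᴴ * p.2 * x :=
    (continuous_fst.matrix_conjTranspose.matrix_mul continuous_snd).matrix_mul continuous_const
  have hmemO : (V, V) ∈ {p : Matrix (Fin n) (Fin n) ℂ × Matrix (Fin n) (Fin n) ℂ |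
      p.1ᴴ * p.2 * x ∈ Ω} := by
    show Vᴴ * V * x ∈ Ω
    rw [← Matrix.star_eq_conjTranspose, hVS.2, one_mul]
    exact hx
  have hnb : {p : Matrix (Fin n) (Fin n) ℂ × Matrix (Fin n) (Fin n) ℂ |
      p.1ᴴ * p.2 * x ∈ Ω} ∈ nhds (V, V) := (hΩopen.preimage hG).mem_nhds hmemO
  rw [nhds_prod_eq, Filter.mem_prod_iff] at hnb
  obtain ⟨P, hP, Q, hQ, hPQ⟩ := hnb
  have hfreqP : ∃ᶠ k in Filter.atTop, U ^ k ∈ P ∩ Q :=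
    mapClusterPt_iff_frequently.mp hV _ (Filter.inter_mem hP hQ)
  obtain ⟨k, hk⟩ := hfreqP.exists
  obtain ⟨l, hlmem, hlge⟩ :=
    (hfreqP.and_eventually (Filter.eventually_ge_atTop (k+1))).exists
  have h2 : (U ^ k, U ^ l) ∈ {p : Matrix (Fin n) (Fin n) ℂ × Matrix (Fin n) (Fin n) ℂ |
      p.1ᴴ * p.2 * x ∈ Ω} := hPQ (Set.mk_mem_prod hk.1 hlmem.2)
  have hsU : Uᴴ * U = 1 := by
    rw [← Matrix.star_eq_conjTranspose]
    exact Matrix.mem_unitaryGroup_iff'.mp hUmem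
  have hkey : (U ^ k)ᴴ * U ^ l = U ^ (l - k) :=
    aux_conjTranspose_pow_mul_pow U hsU k l (by omega)
  refine ⟨x, hx, l - k, by omega, ?_⟩
  rw [hpow (l - k), ← hkey]
  exact h2
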